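/- arXiv:math/0611458 — 3 statements merged into one kernel-verified Lean document; each statement's English description precedes it below -/
import Mathlib

section
/- Let p(x,ξ) = ξ² − |∇φ(x)|² and b(x,ξ) = 2∇φ(x)·ξ, where φ(x) = log|x − x₀| on ℝⁿ \ {x₀}. Then φ is a limiting Carleman weight: the Poisson bracket {p, b}(x,ξ) = ∇_ξ p · ∇_x b − ∇_x p · ∇_ξ b vanishes at every point (x,ξ) with p(x,ξ) = 0 and b(x,ξ) = 0. -/
open Metric

open RealInnerProductSpace in
private lemma grad_of_fderiv {E : Type*} [NormedAddCommGroup E] [InnerProductSpace ℝ E]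
    [CompleteSpace E] {f : E → ℝ} {L : E →L[ℝ] ℝ} {x v : E} (h : HasFDerivAt f L x)
    (hv : ∀ y, L y = ⟪v, y⟫) : HasGradientAt f v x := by
  have h' := (hasFDerivAt_iff_hasGradientAt).1 h
  have hL : L = InnerProductSpace.toDual ℝ E v := by
    ext y
    rw [InnerProductSpace.toDual_apply_apply]
    exact hv y
  rwa [hL, LinearIsometryEquiv.symm_apply_apply] at h'

/-- The logarithmic weight `φ(x) = log|x−x₀|` is a limiting Carleman weight:
with `p(x,ξ) = |ξ|² − |∇φ(x)|²` (note `|∇φ(x)|² = |x−x₀|⁻²`) and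
`b(x,ξ) = 2∇φ(x)·ξ = 2⟨x−x₀,ξ⟩/|x−x₀|²`, the Poisson bracket
`{p,b} = ∇_ξ p·∇_x b − ∇_x p·∇_ξ b` vanishes on `{p = b = 0}`. -/
theorem log_weight_limiting_carleman (n : ℕ) (x₀ : EuclideanSpace ℝ (Fin n))
    (p b : EuclideanSpace ℝ (Fin n) → EuclideanSpace ℝ (Fin n) → ℝ)
    (hp : ∀ x ξ, p x ξ = ‖ξ‖ ^ 2 - (‖x - x₀‖ ^ 2)⁻¹)
    (hb : ∀ x ξ, b x ξ = 2 * (inner ℝ (x - x₀) ξ : ℝ) / ‖x - x₀‖ ^ 2)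
    (x ξ : EuclideanSpace ℝ (Fin n)) (hx : x ≠ x₀)
    (hpz : p x ξ = 0) (hbz : b x ξ = 0) :
    (inner ℝ (gradient (fun ξ' => p x ξ') ξ) (gradient (fun x' => b x' ξ) x) : ℝ) -
      (inner ℝ (gradient (fun x' => p x' ξ) x) (gradient (fun ξ' => b x ξ') ξ) : ℝ) = 0 := by
  have hxne : x - x₀ ≠ 0 := sub_ne_zero.2 (by exact hx)
  have hr2 : (‖x - x₀‖ : ℝ) ^ 2 ≠ 0 := pow_ne_zero 2 (norm_ne_zero_iff.2 hxne)
  -- basic consequences of p = b = 0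
  have hip : (inner ℝ (x - x₀) ξ : ℝ) = 0 := by
    rw [hb] at hbz
    rcases div_eq_zero_iff.1 hbz with h | h
    · linarith
    · exact absurd h hr2
  have hξ2 : ‖ξ‖ ^ 2 = (‖x - x₀‖ ^ 2)⁻¹ := by
    rw [hp] at hpz; linarith
  -- derivative of the squared-norm-type denominator
  have hsq : ∀ y : EuclideanSpace ℝ (Fin n),
      HasFDerivAt (fun x' : EuclideanSpace ℝ (Fin n) => ‖x' - x₀‖ ^ 2)
      ((fderivInnerCLM ℝ (y - x₀, y - x₀)).comp
        ((ContinuousLinearMap.id ℝ _).prod (ContinuousLinearMap.id ℝ _))) y := by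
    intro y
    have h1 : HasFDerivAt (fun x' : EuclideanSpace ℝ (Fin n) => x' - x₀)
        (ContinuousLinearMap.id ℝ _) y := (hasFDerivAt_id y).sub_const x₀
    have h2 := h1.inner (𝕜 := ℝ) h1
    have heq : (fun x' : EuclideanSpace ℝ (Fin n) => (inner ℝ (x' - x₀) (x' - x₀) : ℝ)) =
        fun x' => ‖x' - x₀‖ ^ 2 := by
      funext z; exact real_inner_self_eq_norm_sq _
    rwa [heq] at h2
  -- derivative of the inverse of the denominator
  have hinv : HasFDerivAt (fun x' : EuclideanSpace ℝ (Fin n) => (‖x' - x₀‖ ^ 2)⁻¹)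
      ((ContinuousLinearMap.smulRight (1 : ℝ →L[ℝ] ℝ) (-((‖x - x₀‖ ^ 2) ^ 2)⁻¹)).comp
        ((fderivInnerCLM ℝ (x - x₀, x - x₀)).comp
          ((ContinuousLinearMap.id ℝ _).prod (ContinuousLinearMap.id ℝ _)))) x :=
    (hasFDerivAt_inv hr2).comp x (hsq x)
  -- gradient of ξ' ↦ p x ξ'  is  2 • ξ
  have g1 : HasGradientAt (fun ξ' => p x ξ') ((2 : ℝ) • ξ) ξ := by
    have h1 := (hasFDerivAt_id ξ).inner (𝕜 := ℝ) (hasFDerivAt_id ξ)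
    simp only [id_eq] at h1
    have heq : (fun ξ' : EuclideanSpace ℝ (Fin n) => (inner ℝ ξ' ξ' : ℝ)) =
        fun ξ' => ‖ξ'‖ ^ 2 := by
      funext z; exact real_inner_self_eq_norm_sq _
    rw [heq] at h1
    have h2 := h1.sub_const ((‖x - x₀‖ ^ 2)⁻¹ : ℝ)
    have h3 : (fun ξ' : EuclideanSpace ℝ (Fin n) => ‖ξ'‖ ^ 2 - (‖x - x₀‖ ^ 2)⁻¹) =
        fun ξ' => p x ξ' := by
      funext z; rw [hp]
    rw [h3] at h2
    refine grad_of_fderiv h2 fun y => ?_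
    simp only [ContinuousLinearMap.comp_apply, ContinuousLinearMap.prod_apply,
      ContinuousLinearMap.coe_id', id_eq, fderivInnerCLM_apply,
      ContinuousLinearMap.smulRight_apply, ContinuousLinearMap.one_apply,
      ContinuousLinearMap.neg_apply, ContinuousLinearMap.add_apply,
      ContinuousLinearMap.smul_apply, ContinuousLinearMap.zero_apply,
      ContinuousLinearMap.coe_sub', Pi.sub_apply, real_inner_smul_left, smul_eq_mul,
      inner_zero_right, inner_zero_left]
    rw [real_inner_comm y ξ]
    ring
  -- gradient of x' ↦ p x' ξ
  have g2 : HasGradientAt (fun x' => p x' ξ) ((2 / (‖x - x₀‖ ^ 2) ^ 2) • (x - x₀)) x := by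
    have h1 := hinv.const_sub (‖ξ‖ ^ 2)
    have h3 : (fun x' : EuclideanSpace ℝ (Fin n) => ‖ξ‖ ^ 2 - (‖x' - x₀‖ ^ 2)⁻¹) =
        fun x' => p x' ξ := by
      funext z; rw [hp]
    rw [h3] at h1
    refine grad_of_fderiv h1 fun y => ?_
    simp only [ContinuousLinearMap.comp_apply, ContinuousLinearMap.prod_apply,
      ContinuousLinearMap.coe_id', id_eq, fderivInnerCLM_apply,
      ContinuousLinearMap.smulRight_apply, ContinuousLinearMap.one_apply,
      ContinuousLinearMap.neg_apply, ContinuousLinearMap.add_apply,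
      ContinuousLinearMap.smul_apply, ContinuousLinearMap.zero_apply,
      ContinuousLinearMap.coe_sub', Pi.sub_apply, real_inner_smul_left, smul_eq_mul,
      inner_zero_right, inner_zero_left]
    rw [real_inner_comm y (x - x₀)]
    ring
  -- gradient of ξ' ↦ b x ξ'
  have g3 : HasGradientAt (fun ξ' => b x ξ') ((2 / ‖x - x₀‖ ^ 2) • (x - x₀)) ξ := by
    have h1 := (hasFDerivAt_const (x - x₀) ξ).inner (𝕜 := ℝ) (hasFDerivAt_id ξ)
    simp only [id_eq] at h1
    have h2 := (h1.const_mul (2 : ℝ)).mul_const ((‖x - x₀‖ ^ 2)⁻¹ : ℝ)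
    have h3 : (fun ξ' : EuclideanSpace ℝ (Fin n) =>
        2 * (inner ℝ (x - x₀) ξ' : ℝ) * (‖x - x₀‖ ^ 2)⁻¹) = fun ξ' => b x ξ' := by
      funext z; rw [hb, div_eq_mul_inv]
    rw [h3] at h2
    refine grad_of_fderiv h2 fun y => ?_
    simp only [ContinuousLinearMap.comp_apply, ContinuousLinearMap.prod_apply,
      ContinuousLinearMap.coe_id', id_eq, fderivInnerCLM_apply,
      ContinuousLinearMap.smulRight_apply, ContinuousLinearMap.one_apply,
      ContinuousLinearMap.neg_apply, ContinuousLinearMap.add_apply,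
      ContinuousLinearMap.smul_apply, ContinuousLinearMap.zero_apply,
      ContinuousLinearMap.coe_sub', Pi.sub_apply, real_inner_smul_left, smul_eq_mul,
      inner_zero_right, inner_zero_left]
    ring
  -- gradient of x' ↦ b x' ξ  (using ⟪x-x₀, ξ⟫ = 0)
  have g4 : HasGradientAt (fun x' => b x' ξ) ((2 / ‖x - x₀‖ ^ 2) • ξ) x := by
    have h1 : HasFDerivAt (fun x' : EuclideanSpace ℝ (Fin n) => x' - x₀)
        (ContinuousLinearMap.id ℝ _) x := (hasFDerivAt_id x).sub_const x₀
    have hN := (h1.inner (𝕜 := ℝ) (hasFDerivAt_const ξ x)).const_mul (2 : ℝ)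
    have h2 : HasFDerivAt (fun x' : EuclideanSpace ℝ (Fin n) =>
        2 * (inner ℝ (x' - x₀) ξ : ℝ) * (‖x' - x₀‖ ^ 2)⁻¹) _ x := hN.mul hinv
    have h3 : (fun x' : EuclideanSpace ℝ (Fin n) =>
        2 * (inner ℝ (x' - x₀) ξ : ℝ) * (‖x' - x₀‖ ^ 2)⁻¹) = fun x' => b x' ξ := by
      funext z; rw [hb, div_eq_mul_inv]
    rw [h3] at h2
    refine grad_of_fderiv h2 fun y => ?_
    simp only [ContinuousLinearMap.comp_apply, ContinuousLinearMap.prod_apply,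
      ContinuousLinearMap.coe_id', id_eq, fderivInnerCLM_apply,
      ContinuousLinearMap.smulRight_apply, ContinuousLinearMap.one_apply,
      ContinuousLinearMap.neg_apply, ContinuousLinearMap.add_apply,
      ContinuousLinearMap.smul_apply, ContinuousLinearMap.zero_apply,
      ContinuousLinearMap.coe_sub', Pi.sub_apply, real_inner_smul_left, smul_eq_mul,
      inner_zero_right, inner_zero_left]
    rw [real_inner_comm y (x - x₀), hip, real_inner_comm y ξ]
    ring
  rw [g1.gradient, g2.gradient, g3.gradient, g4.gradient]
  rw [real_inner_smul_left, real_inner_smul_left, real_inner_smul_right, real_inner_smul_right,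
    real_inner_self_eq_norm_sq, real_inner_self_eq_norm_sq, hξ2]
  field_simp
  ring
end

section
/- Let x₀ ∉ closure(Ω) for a bounded open set Ω ⊆ ℝⁿ, φ(x) = log|x − x₀|, and ψ(x) = dist_{S^{n-1}}((x−x₀)/|x−x₀|, ω) the geodesic sphere distance to a fixed direction ω ∈ S^{n-1}, assumed smooth near closure(Ω). Then ρ = φ + iψ satisfies the complex eikonal equation (∇ρ)² = 0, i.e. |∇ψ|² = |∇φ|² and ∇φ·∇ψ = 0 on Ω. -/
open Metric

section aux
variable {F : Type*} [NormedAddCommGroup F] [InnerProductSpace ℝ F] [CompleteSpace F]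

lemma hasGradientAt_comp_deriv {f : F → ℝ} {g : F} {x : F} {h : ℝ → ℝ} {h' : ℝ}
    (hf : HasGradientAt f g x) (hh : HasDerivAt h h' (f x)) :
    HasGradientAt (fun y => h (f y)) (h' • g) x := by
  have H := hh.hasFDerivAt.comp x hf.hasFDerivAt
  rw [hasGradientAt_iff_hasFDerivAt]
  refine H.congr_fderiv ?_
  ext y
  simp [InnerProductSpace.toDual_apply_apply, real_inner_smul_left, mul_comm]

lemma hasGradientAt_mul' {f g : F → ℝ} {gf gg : F} {x : F}
    (hf : HasGradientAt f gf x) (hg : HasGradientAt g gg x) :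
    HasGradientAt (fun y => f y * g y) (f x • gg + g x • gf) x := by
  have H := hf.hasFDerivAt.mul hg.hasFDerivAt
  rw [hasGradientAt_iff_hasFDerivAt]
  refine H.congr_fderiv ?_
  ext y
  simp [InnerProductSpace.toDual_apply_apply, inner_add_left, real_inner_smul_left]

lemma hasGradientAt_inner_const (x₀ ω x : F) :
    HasGradientAt (fun y => (inner ℝ (y - x₀) ω : ℝ)) ω x := by
  have H : HasFDerivAt (fun y : F => (inner ℝ ω (y - x₀) : ℝ)) (innerSL ℝ ω) x := by
    have := (innerSL ℝ ω).hasFDerivAt.comp x ((hasFDerivAt_id x).sub_const x₀)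
    exact this
  have he : (fun y : F => (inner ℝ (y - x₀) ω : ℝ)) = fun y : F => (inner ℝ ω (y - x₀) : ℝ) := by
    funext y; exact real_inner_comm _ _
  rw [hasGradientAt_iff_hasFDerivAt, he]
  refine H.congr_fderiv ?_
  ext y
  simp [InnerProductSpace.toDual_apply_apply]

lemma hasGradientAt_normsq (x₀ x : F) :
    HasGradientAt (fun y => ‖y - x₀‖ ^ 2) ((2:ℝ) • (x - x₀)) x := by
  have H := ((hasFDerivAt_id x).sub_const x₀).norm_sq
  rw [hasGradientAt_iff_hasFDerivAt]
  refine H.congr_fderiv ?_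
  ext y
  simp [InnerProductSpace.toDual_apply_apply, real_inner_smul_left, two_smul, inner_add_left]

end aux

/-- The complex eikonal equation for `ρ = φ + iψ`, where `φ(x) = log|x−x₀|` and
`ψ(x) = dist_{S^{n-1}}((x−x₀)/|x−x₀|, ω) = arccos⟨(x−x₀)/|x−x₀|, ω⟩` is the geodesic
sphere distance to the direction `ω`. Under the smoothness condition that
`(x−x₀)/|x−x₀|` avoids `±ω` on `Ω`, one has `(∇ρ)² = 0`, i.e.
`|∇ψ|² = |∇φ|²` and `∇φ·∇ψ = 0` on `Ω`. -/
theorem eikonal_log_weight (n : ℕ) (Ω : Set (EuclideanSpace ℝ (Fin n)))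
    (hΩo : IsOpen Ω) (hΩb : Bornology.IsBounded Ω)
    (x₀ : EuclideanSpace ℝ (Fin n)) (hx₀ : x₀ ∉ closure Ω)
    (ω : EuclideanSpace ℝ (Fin n)) (hω : ‖ω‖ = 1)
    (φ ψ : EuclideanSpace ℝ (Fin n) → ℝ)
    (hφ : ∀ x, φ x = Real.log ‖x - x₀‖)
    (hψ : ∀ x, ψ x = Real.arccos (inner ℝ ((‖x - x₀‖)⁻¹ • (x - x₀)) ω : ℝ))
    (hsmooth : ∀ x ∈ Ω, (‖x - x₀‖)⁻¹ • (x - x₀) ≠ ω ∧ (‖x - x₀‖)⁻¹ • (x - x₀) ≠ -ω) :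
    ∀ x ∈ Ω, ‖gradient ψ x‖ ^ 2 = ‖gradient φ x‖ ^ 2 ∧
      (inner ℝ (gradient φ x) (gradient ψ x) : ℝ) = 0 := by
  intro x hx
  have hvne : x - x₀ ≠ 0 := by
    rw [sub_ne_zero]
    intro h
    rw [← h] at hx₀
    exact hx₀ (subset_closure hx)
  set v : EuclideanSpace ℝ (Fin n) := x - x₀ with hv
  rw [hv] at hvne
  set r : ℝ := ‖v‖ with hrdef
  have hr : 0 < r := norm_pos_iff.mpr hvne
  set u : EuclideanSpace ℝ (Fin n) := r⁻¹ • v with hu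
  have hun : ‖u‖ = 1 := by
    rw [hu, norm_smul, norm_inv, norm_norm, ← hrdef, inv_mul_cancel₀ hr.ne']
  set c : ℝ := inner ℝ u ω with hc
  -- bounds on c
  have hc1 : c < 1 := by
    rw [hc]
    exact (inner_lt_one_iff_real_of_norm_eq_one hun hω).mpr (hsmooth x hx).1
  have hc2 : -1 < c := by
    have hωn : ‖-ω‖ = 1 := by rwa [norm_neg]
    have := (inner_lt_one_iff_real_of_norm_eq_one hun hωn).mpr (hsmooth x hx).2
    rw [inner_neg_right] at this
    linarith
  have hc2pos : 0 < 1 - c ^ 2 := by nlinarith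
  -- gradient of the norm function
  have hN : HasGradientAt (fun y : EuclideanSpace ℝ (Fin n) => ‖y - x₀‖) u x := by
    have hq := hasGradientAt_normsq x₀ x
    have hrsq : ‖x - x₀‖ ^ 2 ≠ 0 := pow_ne_zero _ (by rw [← hv, ← hrdef]; exact hr.ne')
    have hs := hasGradientAt_comp_deriv hq (Real.hasDerivAt_sqrt hrsq)
    have he : (fun y : EuclideanSpace ℝ (Fin n) => Real.sqrt (‖y - x₀‖ ^ 2)) = fun y : EuclideanSpace ℝ (Fin n) => ‖y - x₀‖ := by
      funext y; exact Real.sqrt_sq (norm_nonneg _)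
    rw [he] at hs
    convert hs using 1
    rw [hu, Real.sqrt_sq (norm_nonneg _), smul_smul, ← hv, ← hrdef]
    congr 1
    field_simp
  -- gradient of φ
  have hφg : HasGradientAt φ (r⁻¹ • u) x := by
    have hφ' : φ = fun y : EuclideanSpace ℝ (Fin n) => Real.log ‖y - x₀‖ := funext hφ
    rw [hφ']
    exact hasGradientAt_comp_deriv hN (Real.hasDerivAt_log hr.ne')
  -- gradient of C y = ‖y-x₀‖⁻¹ * ⟪y-x₀, ω⟫
  have hinv : HasGradientAt (fun y : EuclideanSpace ℝ (Fin n) => ‖y - x₀‖⁻¹) ((-(r ^ 2)⁻¹) • u) x :=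
    hasGradientAt_comp_deriv hN (hasDerivAt_inv hr.ne')
  have hlin := hasGradientAt_inner_const x₀ ω x
  have hCg := hasGradientAt_mul' hinv hlin
  have hvw : (inner ℝ v ω : ℝ) = r * c := by
    rw [hc, hu, real_inner_smul_left]
    field_simp
  have hgC : (‖x - x₀‖⁻¹ • ω + (inner ℝ (x - x₀) ω : ℝ) • (-(r ^ 2)⁻¹) • u)
      = r⁻¹ • (ω - c • u) := by
    rw [← hv, ← hrdef, hvw]
    match_scalars <;> · field_simp; try ring
  rw [hgC] at hCg
  have hCx : ‖x - x₀‖⁻¹ * (inner ℝ (x - x₀) ω : ℝ) = c := by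
    rw [← hv, ← hrdef, hvw]; field_simp
  -- gradient of ψ
  have hψg : HasGradientAt ψ ((-(1 / Real.sqrt (1 - c ^ 2))) • (r⁻¹ • (ω - c • u))) x := by
    have hψ' : ψ = fun y : EuclideanSpace ℝ (Fin n) => Real.arccos (‖y - x₀‖⁻¹ * (inner ℝ (y - x₀) ω : ℝ)) := by
      funext y; rw [hψ y, real_inner_smul_left]
    rw [hψ']
    have hd : HasDerivAt Real.arccos (-(1 / Real.sqrt (1 - c ^ 2)))
        (‖x - x₀‖⁻¹ * (inner ℝ (x - x₀) ω : ℝ)) := by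
      rw [hCx]
      exact Real.hasDerivAt_arccos hc2.ne' hc1.ne
    exact hasGradientAt_comp_deriv hCg hd
  rw [hφg.gradient, hψg.gradient]
  have hw : ‖ω - c • u‖ ^ 2 = 1 - c ^ 2 := by
    rw [norm_sub_sq_real, real_inner_smul_right, norm_smul, hω, hun, real_inner_comm, ← hc]
    simp only [Real.norm_eq_abs, mul_one, one_pow, sq_abs]
    ring
  constructor
  · have h1 : (1:ℝ) - c ^ 2 ≠ 0 := hc2pos.ne'
    simp only [norm_smul, Real.norm_eq_abs, mul_pow, sq_abs, hw, hun]
    rw [neg_sq, div_pow, one_pow, Real.sq_sqrt hc2pos.le]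
    field_simp
  · rw [real_inner_smul_left, real_inner_smul_right, real_inner_smul_right, inner_sub_right,
      real_inner_smul_right, real_inner_self_eq_norm_sq, hun, ← hc]
    ring
end

section
/- Let Ω ⊆ ℝⁿ be a bounded Lipschitz domain, A₁, A₂ ∈ C¹(closure(Ω);ℂⁿ), V₁, V₂ ∈ L^∞(Ω), with 0 not a Dirichlet eigenvalue of H_{A₁,V₁} or of H_{Ā₂,V̄₂}. Let u₁ ∈ H¹(Ω) solve H_{A₁,V₁}u₁ = 0 and u₂ ∈ H¹(Ω) solve H_{Ā₂,V̄₂}u₂ = 0. Then ((Λ_{A₁,V₁} − Λ_{A₂,V₂}) (u₁|_{∂Ω}) | u₂|_{∂Ω})_{∂Ω} = ∫_Ω [ i(A₁−A₂)·(u₁ ∇ū₂ − ū₂ ∇u₁) + (A₁² − A₂² + V₁ − V₂) u₁ ū₂ ] dx. -/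
open MeasureTheory Metric

/-- `Ω` has Lipschitz boundary. -/
def HasLipschitzBoundary {n : ℕ} (Ω : Set (EuclideanSpace ℝ (Fin n))) : Prop :=
  ∀ x ∈ frontier Ω, ∃ (r L : ℝ) (e : EuclideanSpace ℝ (Fin n))
    (φ : EuclideanSpace ℝ (Fin n) → ℝ), 0 < r ∧ ‖e‖ = 1 ∧
    LipschitzWith (Real.toNNReal L) φ ∧
    ∀ y ∈ Metric.ball x r,
      (y ∈ Ω ↔ φ (y - ((inner ℝ y e : ℝ)) • e) < (inner ℝ y e : ℝ))

/-- `i`-th partial derivative. -/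
noncomputable def pd {n : ℕ} (f : EuclideanSpace ℝ (Fin n) → ℂ)
    (x : EuclideanSpace ℝ (Fin n)) (i : Fin n) : ℂ :=
  fderiv ℝ f x (EuclideanSpace.single i 1)

/-- The sesquilinear form of `H_{A,V}`:
`B(u,e) = ∫_Ω (∇+iA)u · conj((∇+iĀ)e) + V u ē dx`, which for a weak solution `u` equals
the DN pairing `(Λ_{A,V}(u|_{∂Ω}) | e|_{∂Ω})_{∂Ω}`. -/
noncomputable def sesq {n : ℕ} (Ω : Set (EuclideanSpace ℝ (Fin n)))
    (A : EuclideanSpace ℝ (Fin n) → Fin n → ℂ) (V : EuclideanSpace ℝ (Fin n) → ℂ)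
    (u e : EuclideanSpace ℝ (Fin n) → ℂ) : ℂ :=
  ∫ x in Ω,
    (∑ i, (pd u x i + Complex.I * A x i * u x) *
        (starRingEnd ℂ) (pd e x i + Complex.I * (starRingEnd ℂ) (A x i) * e x)) +
      V x * u x * (starRingEnd ℂ) (e x)

/-- `u` belongs to `H¹(Ω) ∩ C(closure Ω)` (a convenient class of admissible functions). -/
def Reg {n : ℕ} (Ω : Set (EuclideanSpace ℝ (Fin n)))
    (u : EuclideanSpace ℝ (Fin n) → ℂ) : Prop :=
  ContinuousOn u (closure Ω) ∧ ContDiffOn ℝ 1 u Ω ∧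
    IntegrableOn (fun x => ‖u x‖ ^ 2 + ‖fderiv ℝ u x‖ ^ 2) Ω

/-- `u` is a weak solution of `H_{A,V} u = 0` in `Ω`: the sesquilinear form vanishes
against all admissible test functions vanishing on `∂Ω`. -/
def WeakSol {n : ℕ} (Ω : Set (EuclideanSpace ℝ (Fin n)))
    (A : EuclideanSpace ℝ (Fin n) → Fin n → ℂ) (V : EuclideanSpace ℝ (Fin n) → ℂ)
    (u : EuclideanSpace ℝ (Fin n) → ℂ) : Prop :=
  ∀ e, Reg Ω e → (∀ x ∈ frontier Ω, e x = 0) → sesq Ω A V u e = 0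

/-- `0` is not a Dirichlet eigenvalue of `H_{A,V}` in `Ω`: the only weak solution with
zero boundary values is zero. -/
def ZeroNotDirichletEV {n : ℕ} (Ω : Set (EuclideanSpace ℝ (Fin n)))
    (A : EuclideanSpace ℝ (Fin n) → Fin n → ℂ) (V : EuclideanSpace ℝ (Fin n) → ℂ) : Prop :=
  ∀ w, Reg Ω w → (∀ x ∈ frontier Ω, w x = 0) → WeakSol Ω A V w → ∀ x ∈ Ω, w x = 0


section Aux

variable {n : ℕ}

/-- The integrand of `sesq`. -/
noncomputable def itg (A : EuclideanSpace ℝ (Fin n) → Fin n → ℂ)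
    (V : EuclideanSpace ℝ (Fin n) → ℂ)
    (u e : EuclideanSpace ℝ (Fin n) → ℂ) (x : EuclideanSpace ℝ (Fin n)) : ℂ :=
  (∑ i, (pd u x i + Complex.I * A x i * u x) *
      (starRingEnd ℂ) (pd e x i + Complex.I * (starRingEnd ℂ) (A x i) * e x)) +
    V x * u x * (starRingEnd ℂ) (e x)

lemma sesq_eq_itg (Ω : Set (EuclideanSpace ℝ (Fin n)))
    (A : EuclideanSpace ℝ (Fin n) → Fin n → ℂ) (V : EuclideanSpace ℝ (Fin n) → ℂ)
    (u e : EuclideanSpace ℝ (Fin n) → ℂ) :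
    sesq Ω A V u e = ∫ x in Ω, itg A V u e x := rfl

lemma pd_meas (f : EuclideanSpace ℝ (Fin n) → ℂ) (i : Fin n) :
    Measurable fun x => pd f x i :=
  measurable_fderiv_apply_const ℝ f _

lemma pd_norm_le (f : EuclideanSpace ℝ (Fin n) → ℂ) (x : EuclideanSpace ℝ (Fin n)) (i : Fin n) :
    ‖pd f x i‖ ≤ ‖fderiv ℝ f x‖ := by
  calc ‖pd f x i‖ ≤ ‖fderiv ℝ f x‖ * ‖EuclideanSpace.single i (1:ℝ)‖ :=
        (fderiv ℝ f x).le_opNorm _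
    _ = ‖fderiv ℝ f x‖ := by rw [EuclideanSpace.norm_single]; simp

lemma itg_aesm {Ω : Set (EuclideanSpace ℝ (Fin n))} (hΩo : IsOpen Ω)
    {A : EuclideanSpace ℝ (Fin n) → Fin n → ℂ} (hA : ContinuousOn A (closure Ω))
    {V : EuclideanSpace ℝ (Fin n) → ℂ} (hV : Measurable V)
    {u e : EuclideanSpace ℝ (Fin n) → ℂ}
    (hu : ContinuousOn u (closure Ω)) (he : ContinuousOn e (closure Ω)) :
    AEStronglyMeasurable (itg A V u e) (volume.restrict Ω) := by
  have hms := hΩo.measurableSet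
  have hsub : Ω ⊆ closure Ω := subset_closure
  have hAi : ∀ i : Fin n, AEStronglyMeasurable (fun x => A x i) (volume.restrict Ω) := fun i =>
    (((continuous_apply i).comp_continuousOn hA).mono hsub).aestronglyMeasurable hms
  have hum : AEStronglyMeasurable u (volume.restrict Ω) :=
    (hu.mono hsub).aestronglyMeasurable hms
  have hem : AEStronglyMeasurable e (volume.restrict Ω) :=
    (he.mono hsub).aestronglyMeasurable hms
  have hconj : ∀ g : EuclideanSpace ℝ (Fin n) → ℂ,
      AEStronglyMeasurable g (volume.restrict Ω) →
      AEStronglyMeasurable (fun x => (starRingEnd ℂ) (g x)) (volume.restrict Ω) := fun g hg =>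
    Complex.continuous_conj.comp_aestronglyMeasurable hg
  refine AEStronglyMeasurable.add ?_
    ((hV.aestronglyMeasurable.mul hum).mul (hconj _ hem))
  refine Finset.aestronglyMeasurable_fun_sum _ fun i _ => ?_
  exact ((pd_meas u i).aestronglyMeasurable.add
      ((aestronglyMeasurable_const.mul (hAi i)).mul hum)).mul
    (hconj _ ((pd_meas e i).aestronglyMeasurable.add
      ((aestronglyMeasurable_const.mul (hconj _ (hAi i))).mul hem)))

lemma bound_aux (N P Q R S M Mv : ℝ) (hN : 0 ≤ N) (hP : 0 ≤ P) (hQ : 0 ≤ Q) (hR : 0 ≤ R)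
    (hS : 0 ≤ S) (hM : 0 ≤ M) (hMv : 0 ≤ Mv) :
    N * ((P + M * Q) * (R + M * S)) + Mv * (Q * S) ≤
      (N * (1 + M) ^ 2 + Mv) * ((Q ^ 2 + P ^ 2) + (S ^ 2 + R ^ 2)) := by
  have h2 : P + M * Q ≤ (1 + M) * (P + Q) := by nlinarith
  have h3 : R + M * S ≤ (1 + M) * (R + S) := by nlinarith
  have h4 : (P + M * Q) * (R + M * S) ≤ ((1 + M) * (P + Q)) * ((1 + M) * (R + S)) :=
    mul_le_mul h2 h3 (by positivity) (by positivity)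
  have h5 : (P + Q) * (R + S) ≤ (Q ^ 2 + P ^ 2) + (S ^ 2 + R ^ 2) := by
    nlinarith [sq_nonneg (P + Q - R - S), sq_nonneg (P - Q), sq_nonneg (R - S)]
  have h1 : (P + M * Q) * (R + M * S) ≤ (1 + M) ^ 2 * ((Q ^ 2 + P ^ 2) + (S ^ 2 + R ^ 2)) := by
    nlinarith [mul_le_mul_of_nonneg_left h5 (by positivity : (0:ℝ) ≤ (1 + M) ^ 2)]
  have h6 : Mv * (Q * S) ≤ Mv * ((Q ^ 2 + P ^ 2) + (S ^ 2 + R ^ 2)) := by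
    have : Q * S ≤ (Q ^ 2 + P ^ 2) + (S ^ 2 + R ^ 2) := by
      nlinarith [sq_nonneg (Q - S)]
    exact mul_le_mul_of_nonneg_left this hMv
  nlinarith [mul_le_mul_of_nonneg_left h1 hN]

lemma itg_intOn {Ω : Set (EuclideanSpace ℝ (Fin n))} (hΩo : IsOpen Ω)
    (hΩb : Bornology.IsBounded Ω)
    {A : EuclideanSpace ℝ (Fin n) → Fin n → ℂ} (hA : ContDiffOn ℝ 1 A (closure Ω))
    {V : EuclideanSpace ℝ (Fin n) → ℂ} (hVm : Measurable V)
    (hV : ∃ M, ∀ x ∈ Ω, ‖V x‖ ≤ M)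
    {u e : EuclideanSpace ℝ (Fin n) → ℂ} (hu : Reg Ω u) (he : Reg Ω e) :
    IntegrableOn (itg A V u e) Ω := by
  obtain ⟨Mv0, hMv0⟩ := hV
  set Mv : ℝ := max Mv0 0 with hMvdef
  have hMvnn : 0 ≤ Mv := le_max_right _ _
  have hMv : ∀ x ∈ Ω, ‖V x‖ ≤ Mv := fun x hx => (hMv0 x hx).trans (le_max_left _ _)
  obtain ⟨M0, hM0⟩ := hΩb.isCompact_closure.exists_bound_of_continuousOn hA.continuousOn
  set M : ℝ := max M0 0 with hMdef
  have hMnn : 0 ≤ M := le_max_right _ _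
  have hMA : ∀ x ∈ Ω, ∀ i, ‖A x i‖ ≤ M := fun x hx i =>
    (norm_le_pi_norm (A x) i).trans ((hM0 x (subset_closure hx)).trans (le_max_left _ _))
  set C : ℝ := n * (1 + M) ^ 2 + Mv with hCdef
  have hg : IntegrableOn (fun x => C * ((‖u x‖ ^ 2 + ‖fderiv ℝ u x‖ ^ 2) +
      (‖e x‖ ^ 2 + ‖fderiv ℝ e x‖ ^ 2))) Ω :=
    (hu.2.2.add he.2.2).const_mul C
  refine Integrable.mono' hg (itg_aesm hΩo hA.continuousOn hVm hu.1 he.1) ?_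
  rw [ae_restrict_iff' hΩo.measurableSet]
  refine Filter.Eventually.of_forall fun x hx => ?_
  have h1 : ∀ i : Fin n,
      ‖(pd u x i + Complex.I * A x i * u x) *
        (starRingEnd ℂ) (pd e x i + Complex.I * (starRingEnd ℂ) (A x i) * e x)‖ ≤
      (‖fderiv ℝ u x‖ + M * ‖u x‖) * (‖fderiv ℝ e x‖ + M * ‖e x‖) := by
    intro i
    rw [norm_mul, RCLike.norm_conj]
    refine mul_le_mul ?_ ?_ (norm_nonneg _) (by positivity)
    · calc ‖pd u x i + Complex.I * A x i * u x‖
          ≤ ‖pd u x i‖ + ‖Complex.I * A x i * u x‖ := norm_add_le _ _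
        _ ≤ ‖fderiv ℝ u x‖ + M * ‖u x‖ := by
            rw [norm_mul, norm_mul, Complex.norm_I, one_mul]
            exact add_le_add (pd_norm_le u x i)
              (mul_le_mul_of_nonneg_right (hMA x hx i) (norm_nonneg _))
    · calc ‖pd e x i + Complex.I * (starRingEnd ℂ) (A x i) * e x‖
          ≤ ‖pd e x i‖ + ‖Complex.I * (starRingEnd ℂ) (A x i) * e x‖ := norm_add_le _ _
        _ ≤ ‖fderiv ℝ e x‖ + M * ‖e x‖ := by
            rw [norm_mul, norm_mul, Complex.norm_I, one_mul, RCLike.norm_conj]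
            exact add_le_add (pd_norm_le e x i)
              (mul_le_mul_of_nonneg_right (hMA x hx i) (norm_nonneg _))
  calc ‖itg A V u e x‖
      ≤ ‖∑ i : Fin n, (pd u x i + Complex.I * A x i * u x) *
          (starRingEnd ℂ) (pd e x i + Complex.I * (starRingEnd ℂ) (A x i) * e x)‖ +
        ‖V x * u x * (starRingEnd ℂ) (e x)‖ := norm_add_le _ _
    _ ≤ (∑ i : Fin n, ‖(pd u x i + Complex.I * A x i * u x) *
          (starRingEnd ℂ) (pd e x i + Complex.I * (starRingEnd ℂ) (A x i) * e x)‖) +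
        Mv * (‖u x‖ * ‖e x‖) := by
        refine add_le_add (norm_sum_le _ _) ?_
        rw [norm_mul, norm_mul, RCLike.norm_conj, mul_assoc]
        exact mul_le_mul_of_nonneg_right (hMv x hx) (by positivity)
    _ ≤ (n : ℝ) * ((‖fderiv ℝ u x‖ + M * ‖u x‖) * (‖fderiv ℝ e x‖ + M * ‖e x‖)) +
        Mv * (‖u x‖ * ‖e x‖) := by
        refine add_le_add ?_ le_rfl
        calc (∑ i : Fin n, ‖(pd u x i + Complex.I * A x i * u x) *
              (starRingEnd ℂ) (pd e x i + Complex.I * (starRingEnd ℂ) (A x i) * e x)‖)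
            ≤ ∑ _i : Fin n, (‖fderiv ℝ u x‖ + M * ‖u x‖) * (‖fderiv ℝ e x‖ + M * ‖e x‖) :=
              Finset.sum_le_sum fun i _ => h1 i
          _ = (n : ℝ) * ((‖fderiv ℝ u x‖ + M * ‖u x‖) * (‖fderiv ℝ e x‖ + M * ‖e x‖)) := by
              rw [Finset.sum_const, Finset.card_univ, Fintype.card_fin, nsmul_eq_mul]
    _ ≤ C * ((‖u x‖ ^ 2 + ‖fderiv ℝ u x‖ ^ 2) + (‖e x‖ ^ 2 + ‖fderiv ℝ e x‖ ^ 2)) := by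
        exact bound_aux n _ _ _ _ M Mv (Nat.cast_nonneg n) (norm_nonneg _) (norm_nonneg _)
          (norm_nonneg _) (norm_nonneg _) hMnn hMvnn

lemma reg_sub {Ω : Set (EuclideanSpace ℝ (Fin n))} (hΩo : IsOpen Ω)
    {w u : EuclideanSpace ℝ (Fin n) → ℂ} (hw : Reg Ω w) (hu : Reg Ω u) :
    Reg Ω (fun x => w x - u x) := by
  refine ⟨hw.1.sub hu.1, hw.2.1.sub hu.2.1, ?_⟩
  have hg : IntegrableOn (fun x => (2:ℝ) * ((‖w x‖ ^ 2 + ‖fderiv ℝ w x‖ ^ 2) +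
      (‖u x‖ ^ 2 + ‖fderiv ℝ u x‖ ^ 2))) Ω := (hw.2.2.add hu.2.2).const_mul 2
  have hms := hΩo.measurableSet
  have hsub : Ω ⊆ closure Ω := subset_closure
  have haesm : AEStronglyMeasurable
      (fun x => ‖w x - u x‖ ^ 2 + ‖fderiv ℝ (fun y => w y - u y) x‖ ^ 2)
      (volume.restrict Ω) := by
    refine AEStronglyMeasurable.add ?_ ?_
    · exact ((((hw.1.mono hsub).sub (hu.1.mono hsub)).norm.aestronglyMeasurable hms).pow 2)
    · exact (((measurable_fderiv ℝ (fun y => w y - u y)).norm.pow_const 2).aestronglyMeasurable)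
  refine Integrable.mono' hg haesm ?_
  rw [ae_restrict_iff' hms]
  refine Filter.Eventually.of_forall fun x hx => ?_
  have hdw : DifferentiableAt ℝ w x :=
    ((hw.2.1.differentiableOn one_ne_zero).differentiableAt (hΩo.mem_nhds hx))
  have hdu : DifferentiableAt ℝ u x :=
    ((hu.2.1.differentiableOn one_ne_zero).differentiableAt (hΩo.mem_nhds hx))
  have hfd : fderiv ℝ (fun y => w y - u y) x = fderiv ℝ w x - fderiv ℝ u x :=
    fderiv_fun_sub hdw hdu
  rw [Real.norm_of_nonneg (by positivity), hfd]
  have h1 : ‖w x - u x‖ ≤ ‖w x‖ + ‖u x‖ := norm_sub_le _ _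
  have h2 : ‖fderiv ℝ w x - fderiv ℝ u x‖ ≤ ‖fderiv ℝ w x‖ + ‖fderiv ℝ u x‖ := norm_sub_le _ _
  nlinarith [norm_nonneg (w x - u x), norm_nonneg (fderiv ℝ w x - fderiv ℝ u x),
    norm_nonneg (w x), norm_nonneg (u x), norm_nonneg (fderiv ℝ w x), norm_nonneg (fderiv ℝ u x),
    sq_nonneg (‖w x‖ - ‖u x‖), sq_nonneg (‖fderiv ℝ w x‖ - ‖fderiv ℝ u x‖)]

lemma itg_conj (A : EuclideanSpace ℝ (Fin n) → Fin n → ℂ)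
    (V : EuclideanSpace ℝ (Fin n) → ℂ)
    (u e : EuclideanSpace ℝ (Fin n) → ℂ) (x : EuclideanSpace ℝ (Fin n)) :
    (starRingEnd ℂ) (itg (fun y i => (starRingEnd ℂ) (A y i))
      (fun y => (starRingEnd ℂ) (V y)) u e x) = itg A V e u x := by
  unfold itg
  rw [map_add, map_sum]
  congr 1
  · refine Finset.sum_congr rfl fun i _ => ?_
    simp only [map_add, map_mul, map_neg, neg_neg, Complex.conj_conj, Complex.conj_I]
    ring
  · simp only [map_mul, Complex.conj_conj]
    ring

lemma itg_split (A : EuclideanSpace ℝ (Fin n) → Fin n → ℂ)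
    (V : EuclideanSpace ℝ (Fin n) → ℂ)
    (w u e : EuclideanSpace ℝ (Fin n) → ℂ) (x : EuclideanSpace ℝ (Fin n))
    (hdw : DifferentiableAt ℝ w x) (hdu : DifferentiableAt ℝ u x) :
    itg A V (fun y => w y - u y) e x = itg A V w e x - itg A V u e x := by
  have hpd : ∀ i : Fin n, pd (fun y => w y - u y) x i = pd w x i - pd u x i := by
    intro i
    unfold pd
    rw [fderiv_fun_sub hdw hdu]
    rfl
  unfold itg
  have hsum : (∑ i : Fin n, (pd (fun y => w y - u y) x i +
      Complex.I * A x i * (w x - u x)) *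
      (starRingEnd ℂ) (pd e x i + Complex.I * (starRingEnd ℂ) (A x i) * e x)) =
      (∑ i : Fin n, (pd w x i + Complex.I * A x i * w x) *
        (starRingEnd ℂ) (pd e x i + Complex.I * (starRingEnd ℂ) (A x i) * e x)) -
      (∑ i : Fin n, (pd u x i + Complex.I * A x i * u x) *
        (starRingEnd ℂ) (pd e x i + Complex.I * (starRingEnd ℂ) (A x i) * e x)) := by
    rw [← Finset.sum_sub_distrib]
    refine Finset.sum_congr rfl fun i _ => ?_
    rw [hpd i]
    ring
  rw [hsum]
  ring

lemma itg_diff (A₁ A₂ : EuclideanSpace ℝ (Fin n) → Fin n → ℂ)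
    (V₁ V₂ : EuclideanSpace ℝ (Fin n) → ℂ)
    (u₁ u₂ : EuclideanSpace ℝ (Fin n) → ℂ) (x : EuclideanSpace ℝ (Fin n)) :
    itg A₁ V₁ u₁ u₂ x - itg A₂ V₂ u₁ u₂ x =
      Complex.I * (∑ i, (A₁ x i - A₂ x i) *
          (u₁ x * (starRingEnd ℂ) (pd u₂ x i) - (starRingEnd ℂ) (u₂ x) * pd u₁ x i)) +
        ((∑ i, (A₁ x i) ^ 2) - (∑ i, (A₂ x i) ^ 2) + V₁ x - V₂ x) * u₁ x *
          (starRingEnd ℂ) (u₂ x) := by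
  unfold itg
  have e1 : Complex.I * (∑ i, (A₁ x i - A₂ x i) *
      (u₁ x * (starRingEnd ℂ) (pd u₂ x i) - (starRingEnd ℂ) (u₂ x) * pd u₁ x i)) =
      ∑ i : Fin n, Complex.I * ((A₁ x i - A₂ x i) *
      (u₁ x * (starRingEnd ℂ) (pd u₂ x i) - (starRingEnd ℂ) (u₂ x) * pd u₁ x i)) :=
    Finset.mul_sum _ _ _
  have e2 : (∑ i, (A₁ x i) ^ 2) * (u₁ x * (starRingEnd ℂ) (u₂ x)) =
      ∑ i : Fin n, (A₁ x i) ^ 2 * (u₁ x * (starRingEnd ℂ) (u₂ x)) := Finset.sum_mul _ _ _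
  have e3 : (∑ i, (A₂ x i) ^ 2) * (u₁ x * (starRingEnd ℂ) (u₂ x)) =
      ∑ i : Fin n, (A₂ x i) ^ 2 * (u₁ x * (starRingEnd ℂ) (u₂ x)) := Finset.sum_mul _ _ _
  have hsum : (∑ i : Fin n, (pd u₁ x i + Complex.I * A₁ x i * u₁ x) *
      (starRingEnd ℂ) (pd u₂ x i + Complex.I * (starRingEnd ℂ) (A₁ x i) * u₂ x)) -
      (∑ i : Fin n, (pd u₁ x i + Complex.I * A₂ x i * u₁ x) *
      (starRingEnd ℂ) (pd u₂ x i + Complex.I * (starRingEnd ℂ) (A₂ x i) * u₂ x)) =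
      (∑ i : Fin n, Complex.I * ((A₁ x i - A₂ x i) *
        (u₁ x * (starRingEnd ℂ) (pd u₂ x i) - (starRingEnd ℂ) (u₂ x) * pd u₁ x i))) +
      ((∑ i : Fin n, (A₁ x i) ^ 2 * (u₁ x * (starRingEnd ℂ) (u₂ x))) -
       (∑ i : Fin n, (A₂ x i) ^ 2 * (u₁ x * (starRingEnd ℂ) (u₂ x)))) := by
    rw [← Finset.sum_sub_distrib, ← Finset.sum_sub_distrib, ← Finset.sum_add_distrib]
    refine Finset.sum_congr rfl fun i _ => ?_
    simp only [map_add, map_mul, Complex.conj_conj, Complex.conj_I]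
    linear_combination ((A₂ x i) ^ 2 - (A₁ x i) ^ 2) * (u₁ x * (starRingEnd ℂ) (u₂ x)) *
      Complex.I_sq
  linear_combination hsum - e1 - e2 + e3

end Aux

/-- The fundamental integral identity: if `u₁` solves `H_{A₁,V₁}u₁ = 0`, `u₂` solves
`H_{Ā₂,V̄₂}u₂ = 0`, and `w` solves `H_{A₂,V₂}w = 0` with `w = u₁` on `∂Ω` (so that
`B_{A₂,V₂}(w,u₂)` is the pairing `(Λ_{A₂,V₂}(u₁|_{∂Ω}) | u₂|_{∂Ω})`), then
`((Λ_{A₁,V₁} − Λ_{A₂,V₂})(u₁|_{∂Ω}) | u₂|_{∂Ω})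
  = ∫_Ω i(A₁−A₂)·(u₁∇ū₂ − ū₂∇u₁) + (A₁² − A₂² + V₁ − V₂) u₁ ū₂ dx`. -/
theorem dn_integral_identity (n : ℕ) (Ω : Set (EuclideanSpace ℝ (Fin n)))
    (hΩo : IsOpen Ω) (hΩb : Bornology.IsBounded Ω) (hΩl : HasLipschitzBoundary Ω)
    (A₁ A₂ : EuclideanSpace ℝ (Fin n) → Fin n → ℂ)
    (hA₁ : ContDiffOn ℝ 1 A₁ (closure Ω)) (hA₂ : ContDiffOn ℝ 1 A₂ (closure Ω))
    (V₁ V₂ : EuclideanSpace ℝ (Fin n) → ℂ) (hV₁m : Measurable V₁) (hV₂m : Measurable V₂)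
    (hV₁ : ∃ M, ∀ x ∈ Ω, ‖V₁ x‖ ≤ M) (hV₂ : ∃ M, ∀ x ∈ Ω, ‖V₂ x‖ ≤ M)
    (hev₁ : ZeroNotDirichletEV Ω A₁ V₁)
    (hev₂ : ZeroNotDirichletEV Ω (fun x i => (starRingEnd ℂ) (A₂ x i))
      (fun x => (starRingEnd ℂ) (V₂ x)))
    (u₁ u₂ w : EuclideanSpace ℝ (Fin n) → ℂ)
    (hu₁r : Reg Ω u₁) (hu₂r : Reg Ω u₂) (hwr : Reg Ω w)
    (hu₁ : WeakSol Ω A₁ V₁ u₁)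
    (hu₂ : WeakSol Ω (fun x i => (starRingEnd ℂ) (A₂ x i))
      (fun x => (starRingEnd ℂ) (V₂ x)) u₂)
    (hw : WeakSol Ω A₂ V₂ w) (hwb : ∀ x ∈ frontier Ω, w x = u₁ x) :
    sesq Ω A₁ V₁ u₁ u₂ - sesq Ω A₂ V₂ w u₂ =
      ∫ x in Ω,
        Complex.I * (∑ i, (A₁ x i - A₂ x i) *
            (u₁ x * (starRingEnd ℂ) (pd u₂ x i) - (starRingEnd ℂ) (u₂ x) * pd u₁ x i)) +
          ((∑ i, (A₁ x i) ^ 2) - (∑ i, (A₂ x i) ^ 2) + V₁ x - V₂ x) * u₁ x *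
            (starRingEnd ℂ) (u₂ x) := by
  classical
  set v : EuclideanSpace ℝ (Fin n) → ℂ := fun x => w x - u₁ x with hvdef
  have hvr : Reg Ω v := reg_sub hΩo hwr hu₁r
  have hvb : ∀ x ∈ frontier Ω, v x = 0 := fun x hx => by
    simp only [hvdef, hwb x hx, sub_self]
  have h0 : sesq Ω (fun x i => (starRingEnd ℂ) (A₂ x i))
      (fun x => (starRingEnd ℂ) (V₂ x)) u₂ v = 0 := hu₂ v hvr hvb
  have hconj : sesq Ω A₂ V₂ v u₂ =
      (starRingEnd ℂ) (sesq Ω (fun x i => (starRingEnd ℂ) (A₂ x i))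
        (fun x => (starRingEnd ℂ) (V₂ x)) u₂ v) := by
    rw [sesq_eq_itg, sesq_eq_itg, ← integral_conj]
    simp_rw [itg_conj]
  have hv0 : sesq Ω A₂ V₂ v u₂ = 0 := by rw [hconj, h0, map_zero]
  have hI1 : IntegrableOn (itg A₁ V₁ u₁ u₂) Ω := itg_intOn hΩo hΩb hA₁ hV₁m hV₁ hu₁r hu₂r
  have hI2 : IntegrableOn (itg A₂ V₂ u₁ u₂) Ω := itg_intOn hΩo hΩb hA₂ hV₂m hV₂ hu₁r hu₂r
  have hIv : IntegrableOn (itg A₂ V₂ v u₂) Ω := itg_intOn hΩo hΩb hA₂ hV₂m hV₂ hvr hu₂r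
  have hsplit : sesq Ω A₂ V₂ w u₂ = sesq Ω A₂ V₂ u₁ u₂ + sesq Ω A₂ V₂ v u₂ := by
    rw [sesq_eq_itg Ω A₂ V₂ w u₂, sesq_eq_itg Ω A₂ V₂ u₁ u₂, sesq_eq_itg Ω A₂ V₂ v u₂,
      ← integral_add hI2 hIv]
    refine setIntegral_congr_fun hΩo.measurableSet fun x hx => ?_
    have hdw : DifferentiableAt ℝ w x :=
      (hwr.2.1.differentiableOn one_ne_zero).differentiableAt (hΩo.mem_nhds hx)
    have hdu : DifferentiableAt ℝ u₁ x :=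
      (hu₁r.2.1.differentiableOn one_ne_zero).differentiableAt (hΩo.mem_nhds hx)
    have h' : itg A₂ V₂ v u₂ x = itg A₂ V₂ w u₂ x - itg A₂ V₂ u₁ u₂ x :=
      itg_split A₂ V₂ w u₁ u₂ x hdw hdu
    rw [h']
    ring
  rw [hsplit, hv0, add_zero, sesq_eq_itg, sesq_eq_itg, ← integral_sub hI1 hI2]
  refine setIntegral_congr_fun hΩo.measurableSet fun x _ => ?_
  exact itg_diff A₁ A₂ V₁ V₂ u₁ u₂ x
end
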